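/- Let 0 < α < 1, T > 0, N a positive integer, and r ≥ 1, and consider the discrete Caputo operator D_N^α built from the L1 weights on the graded mesh t_n = T(n/N)^r. Let H be a real inner product space with inner product (·,·) and norm ‖·‖, and let v^0, v^1, ..., v^N ∈ H. Then the L1 scheme is coercive: (D_N^α v^n, v^n) ≥ (1/2) D_N^α ‖v^n‖², for every n = 1, 2, ..., N, where D_N^α ‖v^n‖² denotes the operator applied to the real sequence (‖v^k‖²)_{k=0}^N. -/

import Mathlib

noncomputable section

/-- The graded mesh `t_n = T (n/N)^r` on `[0,T]`. -/
def gmesh (T r : ℝ) (N n : ℕ) : ℝ := T * ((n : ℝ) / (N : ℝ)) ^ r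

/-- The step sizes `τ_n = t_n - t_{n-1}` of the graded mesh. -/
def gstep (T r : ℝ) (N n : ℕ) : ℝ := gmesh T r N n - gmesh T r N (n - 1)

/-- The L1 weights
`d_{n,k} = ((t_n − t_{n−k})^{1−α} − (t_n − t_{n−k+1})^{1−α})/τ_{n−k+1}`. -/
def L1w (α T r : ℝ) (N n k : ℕ) : ℝ :=
  ((gmesh T r N n - gmesh T r N (n - k)) ^ (1 - α)
      - (gmesh T r N n - gmesh T r N (n - k + 1)) ^ (1 - α)) / gstep T r N (n - k + 1)

/-- The discrete Caputo (L1) operator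
`D_N^α v^n = (1/Γ(2−α)) Σ_{k=0}^{n−1} d_{n,n−k} (v^{k+1} − v^k)` for real sequences. -/
def discCaputo (α T r : ℝ) (N : ℕ) (v : ℕ → ℝ) (n : ℕ) : ℝ :=
  (1 / Real.Gamma (2 - α)) * ∑ k ∈ Finset.range n, L1w α T r N n (n - k) * (v (k + 1) - v k)

open RealInnerProductSpace in
/-- The discrete Caputo (L1) operator for sequences in a real inner product space. -/
def discCaputoVec (α T r : ℝ) (N : ℕ) {H : Type*} [NormedAddCommGroup H]
    [InnerProductSpace ℝ H] (v : ℕ → H) (n : ℕ) : H :=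
  (1 / Real.Gamma (2 - α)) • ∑ k ∈ Finset.range n, L1w α T r N n (n - k) • (v (k + 1) - v k)

/-- Abel-summation positivity: if `d` is nonnegative and nondecreasing (where relevant)
and `c` is nonnegative, then `∑_{k<n} d k (c k - c (k+1)) + d (n-1) * c n ≥ 0`. -/
theorem abel_aux (d c : ℕ → ℝ) (n : ℕ) (hn : 1 ≤ n)
    (hd0 : ∀ k, k < n → 0 ≤ d k) (hdm : ∀ k, k + 1 < n → d k ≤ d (k + 1))
    (hc : ∀ k, k ≤ n → 0 ≤ c k) :
    0 ≤ (∑ k ∈ Finset.range n, d k * (c k - c (k + 1))) + d (n - 1) * c n := by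
  induction n, hn using Nat.le_induction with
  | base =>
    have h0 : 0 ≤ d 0 * c 0 := mul_nonneg (hd0 0 one_pos) (hc 0 (by norm_num))
    simp only [Finset.sum_range_one]
    nlinarith [h0]
  | succ n hn ih =>
    have key := ih (fun k hk => hd0 k (by omega)) (fun k hk => hdm k (by omega))
      (fun k hk => hc k (by omega))
    have hdd : d (n - 1) ≤ d n := by
      have := hdm (n - 1) (by omega)
      rwa [Nat.sub_add_cancel hn] at this
    have hcc : 0 ≤ c n := hc n (by omega)
    have hmul : d (n - 1) * c n ≤ d n * c n := mul_le_mul_of_nonneg_right hdd hcc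
    rw [Finset.sum_range_succ]
    have hidx : n + 1 - 1 = n := rfl
    rw [hidx]
    nlinarith [key, hmul]

open RealInnerProductSpace in
/-- coercivity of the L1 scheme:
`(D_N^α v^n, v^n) ≥ (1/2) D_N^α ‖v^n‖²` for `n = 1, …, N`. -/
theorem L1_coercivity
    (α T r : ℝ) (N : ℕ) (hα0 : 0 < α) (hα1 : α < 1) (hT : 0 < T) (hr : 1 ≤ r) (hN : 0 < N)
    {H : Type*} [NormedAddCommGroup H] [InnerProductSpace ℝ H]
    (v : ℕ → H) (n : ℕ) (hn1 : 1 ≤ n) (hnN : n ≤ N) :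
    ⟪discCaputoVec α T r N v n, v n⟫ ≥
      (1 / 2) * discCaputo α T r N (fun k => ‖v k‖ ^ 2) n := by
  classical
  have hΓ : 0 < Real.Gamma (2 - α) := Real.Gamma_pos_of_pos (by linarith)
  have hg : 0 ≤ 1 / Real.Gamma (2 - α) := by positivity
  set p : ℝ := 1 - α with hpdef
  have hp0 : 0 < p := by simp only [hpdef]; linarith
  have hp1 : p < 1 := by simp only [hpdef]; linarith
  set t : ℕ → ℝ := gmesh T r N with htdef
  have htlt : ∀ a b : ℕ, a < b → t a < t b := by
    intro a b hab
    simp only [htdef, gmesh]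
    apply mul_lt_mul_of_pos_left _ hT
    apply Real.rpow_lt_rpow (by positivity) _ (by linarith)
    apply div_lt_div_of_pos_right (by exact_mod_cast hab) (by exact_mod_cast hN)
  have htle : ∀ a b : ℕ, a ≤ b → t a ≤ t b := by
    intro a b hab
    rcases hab.lt_or_eq with h | h
    · exact (htlt a b h).le
    · rw [h]
  set d : ℕ → ℝ := fun k => ((t n - t k) ^ p - (t n - t (k + 1)) ^ p) / (t (k + 1) - t k)
    with hddef
  have hLw : ∀ k ∈ Finset.range n, L1w α T r N n (n - k) = d k := by
    intro k hk
    rw [Finset.mem_range] at hk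
    have h1 : n - (n - k) = k := by omega
    have h2 : n - (n - k) + 1 = k + 1 := by omega
    have h3 : k + 1 - 1 = k := by omega
    simp only [L1w, gstep, h1, h2, h3, hddef, htdef, hpdef]
  have hdpos : ∀ k, k < n → 0 ≤ d k := by
    intro k hk
    have h1 : t k < t (k + 1) := htlt k (k + 1) (by omega)
    have h2 : t (k + 1) ≤ t n := htle (k + 1) n (by omega)
    have hnum : (t n - t (k + 1)) ^ p ≤ (t n - t k) ^ p := by
      apply Real.rpow_le_rpow (by linarith) (by linarith) hp0.le
    exact div_nonneg (by linarith) (by linarith)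
  have hdmono : ∀ k, k + 1 < n → d k ≤ d (k + 1) := by
    intro k hk
    have h1 : t k < t (k + 1) := htlt k (k + 1) (by omega)
    have h2 : t (k + 1) < t (k + 2) := htlt (k + 1) (k + 2) (by omega)
    have h3 : t (k + 2) ≤ t n := htle (k + 2) n (by omega)
    have hconc := (Real.strictConcaveOn_rpow hp0 hp1).concaveOn
    have hslope := hconc.slope_anti_adjacent
      (x := t n - t (k + 2)) (y := t n - t (k + 1)) (z := t n - t k)
      (Set.mem_Ici.mpr (by linarith)) (Set.mem_Ici.mpr (by linarith))
      (by linarith) (by linarith)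
    simp only [hddef]
    have e1 : t n - t k - (t n - t (k + 1)) = t (k + 1) - t k := by ring
    have e2 : t n - t (k + 1) - (t n - t (k + 2)) = t (k + 2) - t (k + 1) := by ring
    rw [e1, e2] at hslope
    exact hslope
  set c : ℕ → ℝ := fun k => ‖v k - v n‖ ^ 2 / 2 with hcdef
  have hc0 : ∀ k, 0 ≤ c k := fun k => by positivity
  have hcn : c n = 0 := by simp [hcdef]
  have key : 0 ≤ ∑ k ∈ Finset.range n, d k * (c k - c (k + 1)) := by
    have h := abel_aux d c n hn1 hdpos hdmono (fun k _ => hc0 k)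
    rw [hcn, mul_zero, add_zero] at h
    exact h
  rw [ge_iff_le, discCaputoVec, discCaputo, real_inner_smul_left, sum_inner]
  have hrw1 : ∑ k ∈ Finset.range n, ⟪L1w α T r N n (n - k) • (v (k + 1) - v k), v n⟫ =
      ∑ k ∈ Finset.range n, d k * (⟪v (k + 1), v n⟫ - ⟪v k, v n⟫) :=
    Finset.sum_congr rfl fun k hk => by
      rw [real_inner_smul_left, hLw k hk, inner_sub_left]
  have hrw2 : ∑ k ∈ Finset.range n,
        L1w α T r N n (n - k) * ((fun k => ‖v k‖ ^ 2) (k + 1) - (fun k => ‖v k‖ ^ 2) k) =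
      ∑ k ∈ Finset.range n, d k * (‖v (k + 1)‖ ^ 2 - ‖v k‖ ^ 2) :=
    Finset.sum_congr rfl fun k hk => by rw [hLw k hk]
  rw [hrw1, hrw2]
  set S1 := ∑ k ∈ Finset.range n, d k * (⟪v (k + 1), v n⟫ - ⟪v k, v n⟫) with hS1
  set S2 := ∑ k ∈ Finset.range n, d k * (‖v (k + 1)‖ ^ 2 - ‖v k‖ ^ 2) with hS2
  have hterm : S1 - (1 / 2) * S2 = ∑ k ∈ Finset.range n, d k * (c k - c (k + 1)) := by
    rw [hS1, hS2, Finset.mul_sum, ← Finset.sum_sub_distrib]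
    refine Finset.sum_congr rfl fun k _ => ?_
    have e1 : ‖v k - v n‖ ^ 2 = ‖v k‖ ^ 2 - 2 * ⟪v k, v n⟫ + ‖v n‖ ^ 2 :=
      norm_sub_sq_real _ _
    have e2 : ‖v (k + 1) - v n‖ ^ 2 = ‖v (k + 1)‖ ^ 2 - 2 * ⟪v (k + 1), v n⟫ + ‖v n‖ ^ 2 :=
      norm_sub_sq_real _ _
    simp only [hcdef, e1, e2]
    ring
  have hhalf : (1 / 2) * S2 ≤ S1 := by linarith [key, hterm]
  calc (1 / 2) * (1 / Real.Gamma (2 - α) * S2)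
      = 1 / Real.Gamma (2 - α) * ((1 / 2) * S2) := by ring
    _ ≤ 1 / Real.Gamma (2 - α) * S1 := mul_le_mul_of_nonneg_left hhalf hg
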